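/- arXiv:2603.10190 — 4 statements merged into one kernel-verified Lean document; each statement's English description precedes it below -/
import Mathlib

section
/- Let μ̃ ∈ (0,1) and 0 < t < 1 - μ̃. Then there exists h > 0 such that e^{-μ̃h - th}(1 - μ̃ + μ̃ e^{h}) ≤ e^{-2t²}. In particular, taking h₀ = ln((1-μ̃)(t+μ̃)/((1-μ̃-t)μ̃)) works. -/
open Real

lemma G_hasDeriv (p : ℝ) {x : ℝ} (hx0 : 0 < x) (hx1 : x < 1) :
    HasDerivAt (fun x : ℝ => log x - log p - (log (1-x) - log (1-p)) - 4*(x-p))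
      (1/x + 1/(1-x) - 4) x := by
  have h1x : (0:ℝ) < 1 - x := by linarith
  have hl : HasDerivAt (fun x : ℝ => log (1-x)) (-(1/(1-x))) x := by
    have := (Real.hasDerivAt_log h1x.ne').comp x ((hasDerivAt_const x (1:ℝ)).sub (hasDerivAt_id x))
    exact this.congr_deriv (by ring)
  have h := (((Real.hasDerivAt_log hx0.ne').sub_const (log p)).sub
      (hl.sub_const (log (1-p)))).sub
      (((hasDerivAt_id x).sub_const p).const_mul 4)
  refine h.congr_deriv ?_
  rw [one_div]
  ring

lemma F_hasDeriv (p : ℝ) {x : ℝ} (hx0 : 0 < x) (hx1 : x < 1) :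
    HasDerivAt (fun x : ℝ => x*(log x - log p) + (1-x)*(log (1-x) - log (1-p)) - 2*(x-p)^2)
      (log x - log p - (log (1-x) - log (1-p)) - 4*(x-p)) x := by
  have h1x : (0:ℝ) < 1 - x := by linarith
  have hl : HasDerivAt (fun x : ℝ => log (1-x)) (-(1/(1-x))) x := by
    have := (Real.hasDerivAt_log h1x.ne').comp x ((hasDerivAt_const x (1:ℝ)).sub (hasDerivAt_id x))
    exact this.congr_deriv (by ring)
  have h1 : HasDerivAt (fun x : ℝ => x*(log x - log p))
      (1*(log x - log p) + x*x⁻¹) x :=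
    (hasDerivAt_id x).mul ((Real.hasDerivAt_log hx0.ne').sub_const (log p))
  have h2 : HasDerivAt (fun x : ℝ => (1-x)*(log (1-x) - log (1-p)))
      ((-1)*(log (1-x) - log (1-p)) + (1-x)*(-(1/(1-x)))) x := by
    have := (((hasDerivAt_const x (1:ℝ)).sub (hasDerivAt_id x)).mul
      (hl.sub_const (log (1-p))))
    exact this.congr_deriv (by simp)
  have h3 : HasDerivAt (fun x : ℝ => 2*(x-p)^2) (2*(2*(x-p))) x := by
    have := (((hasDerivAt_id x).sub_const p).pow 2).const_mul (2:ℝ)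
    simpa using this
  have h := (h1.add h2).sub h3
  refine h.congr_deriv ?_
  rw [mul_inv_cancel₀ hx0.ne', mul_neg, mul_one_div_cancel h1x.ne']
  ring

lemma pinsker (p q : ℝ) (hp : 0 < p) (hq : q < 1) (hpq : p ≤ q) :
    2*(q-p)^2 ≤ q*(log q - log p) + (1-q)*(log (1-q) - log (1-p)) := by
  set G : ℝ → ℝ := fun x => log x - log p - (log (1-x) - log (1-p)) - 4*(x-p) with hG
  set F : ℝ → ℝ := fun x => x*(log x - log p) + (1-x)*(log (1-x) - log (1-p)) - 2*(x-p)^2 with hF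
  have hmem : ∀ x ∈ Set.Icc p q, 0 < x ∧ x < 1 := fun x hx =>
    ⟨lt_of_lt_of_le hp hx.1, lt_of_le_of_lt hx.2 hq⟩
  have hint : interior (Set.Icc p q) = Set.Ioo p q := interior_Icc
  have hmemI : ∀ x ∈ interior (Set.Icc p q), 0 < x ∧ x < 1 := by
    rw [hint]; exact fun x hx => hmem x (Set.Ioo_subset_Icc_self hx)
  -- G is monotone on Icc p q
  have hGmono : MonotoneOn G (Set.Icc p q) := by
    apply monotoneOn_of_deriv_nonneg (convex_Icc p q)
    · exact fun x hx => (G_hasDeriv p (hmem x hx).1 (hmem x hx).2).continuousAt.continuousWithinAt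
    · exact fun x hx => (G_hasDeriv p (hmemI x hx).1 (hmemI x hx).2).differentiableAt.differentiableWithinAt
    · intro x hx
      obtain ⟨hx0, hx1⟩ := hmemI x hx
      rw [(G_hasDeriv p hx0 hx1).deriv]
      have h1x : (0:ℝ) < 1 - x := by linarith
      have key : 0 ≤ (2*x-1)^2/(x*(1-x)) := div_nonneg (sq_nonneg _) (mul_pos hx0 h1x).le
      have heq : 1/x + 1/(1-x) - 4 = (2*x-1)^2/(x*(1-x)) := by field_simp; ring
      rw [heq]; exact key
  have hGp : G p = 0 := by simp [hG]
  have hGnonneg : ∀ x ∈ Set.Icc p q, 0 ≤ G x := fun x hx => by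
    have := hGmono (Set.left_mem_Icc.2 hpq) hx hx.1
    linarith [hGp ▸ this]
  -- F is monotone on Icc p q
  have hFmono : MonotoneOn F (Set.Icc p q) := by
    apply monotoneOn_of_deriv_nonneg (convex_Icc p q)
    · exact fun x hx => (F_hasDeriv p (hmem x hx).1 (hmem x hx).2).continuousAt.continuousWithinAt
    · exact fun x hx => (F_hasDeriv p (hmemI x hx).1 (hmemI x hx).2).differentiableAt.differentiableWithinAt
    · intro x hx
      rw [(F_hasDeriv p (hmemI x hx).1 (hmemI x hx).2).deriv]
      rw [hint] at hx
      exact hGnonneg x (Set.Ioo_subset_Icc_self hx)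
  have hFp : F p = 0 := by simp [hF]
  have := hFmono (Set.left_mem_Icc.2 hpq) (Set.right_mem_Icc.2 hpq) hpq
  rw [hFp] at this
  simp only [hF] at this
  linarith

/-- There exists `h > 0` with `e^{-μ̃h - th}(1 - μ̃ + μ̃ e^h) ≤ e^{-2t²}`; in particular
`h₀ = ln((1-μ̃)(t+μ̃)/((1-μ̃-t)μ̃))` works. -/
theorem exists_pos_exp_bound (μ t : ℝ) (hμ0 : 0 < μ) (hμ1 : μ < 1)
    (ht0 : 0 < t) (ht1 : t < 1 - μ) :
    (∃ h > 0, exp (-μ * h - t * h) * (1 - μ + μ * exp h) ≤ exp (-2 * t ^ 2)) ∧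
      (0 < log ((1 - μ) * (t + μ) / ((1 - μ - t) * μ)) ∧
        exp (-μ * log ((1 - μ) * (t + μ) / ((1 - μ - t) * μ))
              - t * log ((1 - μ) * (t + μ) / ((1 - μ - t) * μ))) *
            (1 - μ + μ * exp (log ((1 - μ) * (t + μ) / ((1 - μ - t) * μ)))) ≤
          exp (-2 * t ^ 2)) := by
  have h1μt : 0 < 1 - μ - t := by linarith
  have h1μ : 0 < 1 - μ := by linarith
  have htμ : 0 < t + μ := by linarith
  have hden : 0 < (1 - μ - t) * μ := mul_pos h1μt hμ0
  have hnum : 0 < (1 - μ) * (t + μ) := mul_pos h1μ htμ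
  set R : ℝ := (1 - μ) * (t + μ) / ((1 - μ - t) * μ) with hRdef
  have hR1 : 1 < R := by
    rw [hRdef, lt_div_iff₀ hden]
    nlinarith
  have hR0 : 0 < R := by linarith
  have hL : 0 < log R := log_pos hR1
  have hexpL : exp (log R) = R := exp_log hR0
  -- main inequality
  have hkey : exp (-μ * log R - t * log R) * (1 - μ + μ * exp (log R)) ≤ exp (-2 * t ^ 2) := by
    rw [hexpL]
    have hfac : 1 - μ + μ * R = (1 - μ) / (1 - μ - t) := by
      rw [hRdef]; field_simp; ring
    rw [hfac]
    have hfe : (1 - μ) / (1 - μ - t) = exp (log ((1 - μ) / (1 - μ - t))) :=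
      (exp_log (div_pos h1μ h1μt)).symm
    rw [hfe, ← exp_add, exp_le_exp]
    -- expand logs
    have hlogR : log R = log (1 - μ) + log (t + μ) - (log (1 - μ - t) + log μ) := by
      rw [hRdef, log_div hnum.ne' hden.ne', log_mul h1μ.ne' htμ.ne',
        log_mul h1μt.ne' hμ0.ne']
    have hlogf : log ((1 - μ) / (1 - μ - t)) = log (1 - μ) - log (1 - μ - t) :=
      log_div h1μ.ne' h1μt.ne'
    have hpin := pinsker μ (μ + t) hμ0 (by linarith) (by linarith)
    have hq : 1 - (μ + t) = 1 - μ - t := by ring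
    have ht2 : (μ + t) - μ = t := by ring
    rw [hlogR, hlogf]
    have hμt : log (μ + t) = log (t + μ) := by ring_nf
    rw [hq, ht2, hμt] at hpin
    nlinarith [hpin]
  exact ⟨⟨log R, hL, hkey⟩, hL, hkey⟩
end

section
/- For μ̃ ∈ (0,1) and 0 < t < 1 - μ̃, the Kullback–Leibler-type bound holds: (μ̃/(μ̃+t))^{μ̃+t} · ((1-μ̃)/(1-μ̃-t))^{1-μ̃-t} ≤ e^{-2t²}. -/
open Real

private lemma g_hasDeriv (μ : ℝ) {x : ℝ} (hx0 : 0 < x) (hx1 : x < 1) :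
    HasDerivAt (fun x => log x - log μ - log (1 - x) + log (1 - μ) - 4 * (x - μ))
      (1 / x + 1 / (1 - x) - 4) x := by
  have h1 : HasDerivAt (fun x : ℝ => log x) (1 / x) x := by
    simpa [one_div] using Real.hasDerivAt_log hx0.ne'
  have hs : HasDerivAt (fun x : ℝ => 1 - x) (-1) x := by
    simpa using (hasDerivAt_id x).const_sub 1
  have h2 : HasDerivAt (fun x : ℝ => log (1 - x)) (-(1 / (1 - x))) x := by
    have := (Real.hasDerivAt_log (by linarith : (1:ℝ) - x ≠ 0)).comp x hs
    refine this.congr_deriv ?_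
    field_simp
  have h3 : HasDerivAt (fun x : ℝ => 4 * (x - μ)) 4 x := by
    simpa using ((hasDerivAt_id x).sub_const μ).const_mul 4
  have := (((h1.sub_const (log μ)).sub h2).add_const (log (1 - μ))).sub h3
  refine this.congr_deriv ?_
  ring

private lemma f_hasDeriv (μ : ℝ) {x : ℝ} (hx0 : 0 < x) (hx1 : x < 1) :
    HasDerivAt (fun x => x * (log x - log μ) + (1 - x) * (log (1 - x) - log (1 - μ))
        - 2 * (x - μ) ^ 2)
      (log x - log μ - log (1 - x) + log (1 - μ) - 4 * (x - μ)) x := by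
  have h1 : HasDerivAt (fun x : ℝ => log x) (1 / x) x := by
    simpa [one_div] using Real.hasDerivAt_log hx0.ne'
  have hs : HasDerivAt (fun x : ℝ => 1 - x) (-1) x := by
    simpa using (hasDerivAt_id x).const_sub 1
  have h2 : HasDerivAt (fun x : ℝ => log (1 - x)) (-(1 / (1 - x))) x := by
    have := (Real.hasDerivAt_log (by linarith : (1:ℝ) - x ≠ 0)).comp x hs
    refine this.congr_deriv ?_
    field_simp
  have ha : HasDerivAt (fun x : ℝ => x * (log x - log μ))
      (1 * (log x - log μ) + x * (1 / x)) x :=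
    (hasDerivAt_id x).mul (h1.sub_const (log μ))
  have hb : HasDerivAt (fun x : ℝ => (1 - x) * (log (1 - x) - log (1 - μ)))
      ((-1) * (log (1 - x) - log (1 - μ)) + (1 - x) * (-(1 / (1 - x)))) x :=
    hs.mul (h2.sub_const (log (1 - μ)))
  have hc : HasDerivAt (fun x : ℝ => 2 * (x - μ) ^ 2) (2 * (2 * (x - μ))) x := by
    have := (((hasDerivAt_id x).sub_const μ).pow 2).const_mul 2
    simpa using this
  have := (ha.add hb).sub hc
  refine this.congr_deriv ?_
  have hx' : x ≠ 0 := hx0.ne'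
  have h1x : (1:ℝ) - x ≠ 0 := by linarith
  field_simp
  ring

/-- The Kullback–Leibler-type bound:
`(μ̃/(μ̃+t))^{μ̃+t} ((1-μ̃)/(1-μ̃-t))^{1-μ̃-t} ≤ e^{-2t²}`. -/
theorem kl_type_bound (μ t : ℝ) (hμ0 : 0 < μ) (hμ1 : μ < 1)
    (ht0 : 0 < t) (ht1 : t < 1 - μ) :
    (μ / (μ + t)) ^ (μ + t) * ((1 - μ) / (1 - μ - t)) ^ (1 - μ - t) ≤
      exp (-2 * t ^ 2) := by
  have hμt1 : μ + t < 1 := by linarith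
  have hμt0 : 0 < μ + t := by linarith
  have h1μ : 0 < 1 - μ := by linarith
  have h1μt : 0 < 1 - μ - t := by linarith
  set g : ℝ → ℝ := fun x => log x - log μ - log (1 - x) + log (1 - μ) - 4 * (x - μ) with hg
  set f : ℝ → ℝ := fun x => x * (log x - log μ) + (1 - x) * (log (1 - x) - log (1 - μ))
      - 2 * (x - μ) ^ 2 with hf
  have hmem : ∀ x ∈ Set.Icc μ (μ + t), 0 < x ∧ x < 1 := by
    intro x hx
    exact ⟨lt_of_lt_of_le hμ0 hx.1, lt_of_le_of_lt hx.2 hμt1⟩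
  -- g is monotone on [μ, μ+t]
  have hgmono : MonotoneOn g (Set.Icc μ (μ + t)) := by
    apply monotoneOn_of_deriv_nonneg (convex_Icc _ _)
    · intro x hx
      exact (g_hasDeriv μ (hmem x hx).1 (hmem x hx).2).continuousAt.continuousWithinAt
    · intro x hx
      have hx' := hmem x (interior_subset hx)
      exact (g_hasDeriv μ hx'.1 hx'.2).differentiableAt.differentiableWithinAt
    · intro x hx
      have hx' := hmem x (interior_subset hx)
      rw [(g_hasDeriv μ hx'.1 hx'.2).deriv]
      have hx0 := hx'.1; have hx1 := hx'.2
      have h1x : 0 < 1 - x := by linarith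
      have key : 1 / x + 1 / (1 - x) = 1 / (x * (1 - x)) := by
        field_simp
        ring
      rw [key, sub_nonneg, show (4:ℝ) = 4 / 1 by norm_num]
      rw [div_le_div_iff₀ one_pos (by positivity)]
      nlinarith [sq_nonneg (2 * x - 1)]
  have hgμ : g μ = 0 := by simp [hg]
  have hgnonneg : ∀ x ∈ Set.Icc μ (μ + t), 0 ≤ g x := by
    intro x hx
    have := hgmono (Set.left_mem_Icc.2 (by linarith)) hx hx.1
    linarith [hgμ ▸ this]
  -- f is monotone on [μ, μ+t]
  have hfmono : MonotoneOn f (Set.Icc μ (μ + t)) := by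
    apply monotoneOn_of_deriv_nonneg (convex_Icc _ _)
    · intro x hx
      exact (f_hasDeriv μ (hmem x hx).1 (hmem x hx).2).continuousAt.continuousWithinAt
    · intro x hx
      have hx' := hmem x (interior_subset hx)
      exact (f_hasDeriv μ hx'.1 hx'.2).differentiableAt.differentiableWithinAt
    · intro x hx
      have hx' := hmem x (interior_subset hx)
      rw [(f_hasDeriv μ hx'.1 hx'.2).deriv]
      exact hgnonneg x (interior_subset hx)
  have hfμ : f μ = 0 := by simp [hf]
  have hfp : 0 ≤ f (μ + t) := by
    have := hfmono (Set.left_mem_Icc.2 (by linarith)) (Set.right_mem_Icc.2 (by linarith))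
      (by linarith)
    linarith [hfμ ▸ this]
  rw [hf] at hfp
  simp only at hfp
  have key : (μ + t) * (log μ - log (μ + t)) + (1 - μ - t) * (log (1 - μ) - log (1 - μ - t))
      ≤ -2 * t ^ 2 := by
    have hr : (1:ℝ) - (μ + t) = 1 - μ - t := by ring
    rw [hr] at hfp
    nlinarith [hfp]
  have e1 : (μ / (μ + t)) ^ (μ + t) = exp ((μ + t) * (log μ - log (μ + t))) := by
    rw [Real.rpow_def_of_pos (by positivity), Real.log_div hμ0.ne' hμt0.ne']
    ring_nf
  have e2 : ((1 - μ) / (1 - μ - t)) ^ (1 - μ - t)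
      = exp ((1 - μ - t) * (log (1 - μ) - log (1 - μ - t))) := by
    rw [Real.rpow_def_of_pos (by positivity), Real.log_div h1μ.ne' h1μt.ne']
    ring_nf
  rw [e1, e2, ← Real.exp_add]
  exact Real.exp_le_exp.2 key
end

section
/- Define g(μ̃) = (1/(1-2μ̃))·ln((1-μ̃)/μ̃) for 0 < μ̃ < 1/2 and g(μ̃) = 1/(2μ̃(1-μ̃)) for 1/2 ≤ μ̃ < 1. Then g(μ̃) ≥ 2 for all μ̃ ∈ (0,1), with equality at μ̃ = 1/2. -/
open Real

lemma g_key (μ : ℝ) (h0 : 0 < μ) (h1 : μ ≤ 1 / 2) :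
    2 - 4 * μ ≤ log (1 - μ) - log μ := by
  set f : ℝ → ℝ := fun x => log (1 - x) - log x + 4 * x with hf
  have hderiv : ∀ x ∈ Set.Ioo μ (1 / 2 : ℝ),
      HasDerivAt f (-(1 - x)⁻¹ - x⁻¹ + 4) x := by
    intro x hx
    have hx0 : 0 < x := lt_trans h0 hx.1
    have hx1 : x < 1 := by linarith [hx.2]
    have hl1 : HasDerivAt (fun x : ℝ => 1 - x) (-1) x := (hasDerivAt_id x).const_sub 1
    have h1x : HasDerivAt (fun x : ℝ => log (1 - x)) (-(1 - x)⁻¹) x := by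
      have := (Real.hasDerivAt_log (by linarith : (1 : ℝ) - x ≠ 0)).comp x hl1
      exact this.congr_deriv (by ring)
    have hlx : HasDerivAt log x⁻¹ x := Real.hasDerivAt_log hx0.ne'
    have h4 : HasDerivAt (fun x : ℝ => 4 * x) 4 x := by
      simpa using (hasDerivAt_id x).const_mul (4 : ℝ)
    exact (h1x.sub hlx).add h4
  have hanti : AntitoneOn f (Set.Icc μ (1 / 2 : ℝ)) := by
    apply antitoneOn_of_deriv_nonpos (convex_Icc _ _)
    · apply ContinuousOn.add
      apply ContinuousOn.sub
      · apply ContinuousOn.log (by fun_prop)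
        intro x hx
        have : x ≤ 1 / 2 := hx.2
        intro h; linarith
      · apply ContinuousOn.log continuousOn_id
        intro x hx
        have : μ ≤ x := hx.1
        intro h; simp only [id_eq] at h; rw [h] at this; linarith
      · fun_prop
    · intro x hx
      rw [interior_Icc] at hx
      exact ((hderiv x hx).differentiableAt).differentiableWithinAt
    · intro x hx
      rw [interior_Icc] at hx
      rw [(hderiv x hx).deriv]
      have hx0 : 0 < x := lt_trans h0 hx.1
      have hx1 : x < 1 / 2 := hx.2
      have h1x : 0 < 1 - x := by linarith
      have key : 4 ≤ (1 - x)⁻¹ + x⁻¹ := by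
        rw [inv_eq_one_div, inv_eq_one_div, div_add_div _ _ h1x.ne' hx0.ne',
          le_div_iff₀ (by positivity)]
        nlinarith [sq_nonneg (2 * x - 1)]
      linarith
  rcases eq_or_lt_of_le h1 with heq | hlt
  · subst heq; norm_num
  · have h := hanti (Set.mem_Icc.mpr ⟨le_refl _, h1⟩)
      (Set.mem_Icc.mpr ⟨h1, le_refl _⟩) h1
    have hfhalf : f (1 / 2) = 2 := by
      simp only [hf]; norm_num
    rw [hfhalf] at h
    simp only [hf] at h
    linarith

/-- The piecewise function `g` satisfies `g(μ̃) ≥ 2` on `(0,1)`, with equality at `μ̃ = 1/2`. -/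
theorem g_ge_two :
    (∀ μ : ℝ, 0 < μ → μ < 1 →
      2 ≤ (if μ < 1 / 2 then (1 / (1 - 2 * μ)) * log ((1 - μ) / μ)
            else 1 / (2 * μ * (1 - μ)))) ∧
      (if (1 : ℝ) / 2 < 1 / 2 then (1 / (1 - 2 * (1 / 2 : ℝ))) * log ((1 - 1 / 2) / (1 / 2))
        else 1 / (2 * (1 / 2 : ℝ) * (1 - 1 / 2))) = 2 := by
  constructor
  · intro μ h0 h1
    by_cases hμ : μ < 1 / 2
    · rw [if_pos hμ]
      have h2 : 0 < 1 - 2 * μ := by linarith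
      rw [one_div_mul_eq_div, le_div_iff₀ h2, log_div (by linarith) h0.ne']
      have := g_key μ h0 hμ.le
      linarith
    · rw [if_neg hμ]
      push_neg at hμ
      have hpos : 0 < 2 * μ * (1 - μ) := by
        have : 0 < 1 - μ := by linarith
        positivity
      rw [le_div_iff₀ hpos]
      nlinarith [sq_nonneg (2 * μ - 1)]
  · norm_num
end

section
/- (Hoeffding-type lower tail bound for exchangeable random variables) Under the same setup, with μ̃₋ = inf_{q ∈ supp(ρ)} E_q[X₁], for 0 < t < μ̃₋ one has P(μ̃₋ - X̄ ≥ t) ≤ e^{-2Mt²}. -/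
open MeasureTheory ProbabilityTheory Real

noncomputable instance : MeasurableSpace (ProbabilityMeasure ℝ) := borel _

/-- The mixture `∫ q^{⊗M} ρ(dq)` of i.i.d. product laws over the mixing measure `ρ`. -/
noncomputable def iidMix (M : ℕ) (ρ : Measure (ProbabilityMeasure ℝ)) : Measure (Fin M → ℝ) :=
  ρ.bind fun q => Measure.pi fun _ => (q : Measure ℝ)

/-- The (topological) support of a measure on `P[0,1]`-type spaces: the set of points all of
whose open neighbourhoods have positive measure. -/
def mSupport (ρ : Measure (ProbabilityMeasure ℝ)) : Set (ProbabilityMeasure ℝ) :=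
  {q | ∀ U : Set (ProbabilityMeasure ℝ), IsOpen U → q ∈ U → ρ U ≠ 0}

/-- The mean `E_q[X] = ∫ x q(dx)` of a probability measure `q`. -/
noncomputable def pMean (q : ProbabilityMeasure ℝ) : ℝ := ∫ x, x ∂(q : Measure ℝ)

open Topology Metric TopologicalSpace

section Aux

lemma bern_aux (p : ℝ) (hp0 : 0 ≤ p) (hp1 : p ≤ 1) (l : ℝ) :
    0 < 1 - p + p * exp (-l) := by nlinarith [exp_pos (-l), mul_nonneg hp0 (exp_pos (-l)).le, mul_le_one₀ hp1 (exp_pos (-l)).le, sq_nonneg (1-p)]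

lemma bern (p lam : ℝ) (hp0 : 0 ≤ p) (hp1 : p ≤ 1) (hl : 0 ≤ lam) :
    1 - p + p * exp (-lam) ≤ exp (lam ^ 2 / 8 - lam * p) := by
  have hD := bern_aux p hp0 hp1
  set f : ℝ → ℝ := fun l => l ^ 2 / 8 - l * p - log (1 - p + p * exp (-l)) with hf
  set g : ℝ → ℝ := fun l => l / 4 - p + p * exp (-l) / (1 - p + p * exp (-l)) with hg
  have hNd : ∀ l : ℝ, HasDerivAt (fun l => p * exp (-l)) (-(p * exp (-l))) l := by
    intro l
    have h := ((hasDerivAt_neg l).exp.const_mul p)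
    refine h.congr_deriv ?_
    ring
  have hDd : ∀ l : ℝ, HasDerivAt (fun l => 1 - p + p * exp (-l)) (-(p * exp (-l))) l := by
    intro l
    exact (hNd l).const_add (1 - p)
  have hfd : ∀ l : ℝ, HasDerivAt f (g l) l := by
    intro l
    have h1 : HasDerivAt (fun l : ℝ => l ^ 2 / 8) (l / 4) l := by
      have := (hasDerivAt_pow 2 l).div_const 8
      refine this.congr_deriv ?_
      ring
    have h2 : HasDerivAt (fun l : ℝ => l * p) p l := by
      simpa using (hasDerivAt_id l).mul_const p
    have h3 : HasDerivAt (fun l => log (1 - p + p * exp (-l)))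
        (-(p * exp (-l)) / (1 - p + p * exp (-l))) l := (hDd l).log (hD l).ne'
    have := (h1.sub h2).sub h3
    refine this.congr_deriv ?_
    rw [hg]
    field_simp
    ring
  have hgd : ∀ l : ℝ, HasDerivAt g
      (1/4 - (p * exp (-l) / (1 - p + p * exp (-l))) *
        (1 - p * exp (-l) / (1 - p + p * exp (-l)))) l := by
    intro l
    have h1 : HasDerivAt (fun l : ℝ => l / 4) (1/4 : ℝ) l := by
      simpa using (hasDerivAt_id l).div_const 4
    have h2 := (hNd l).div (hDd l) (hD l).ne'
    have := (h1.sub_const p).add h2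
    refine this.congr_deriv ?_
    have := (hD l).ne'
    field_simp
    ring
  have hgmono : Monotone g :=
    monotone_of_deriv_nonneg (fun l => (hgd l).differentiableAt) (by
      intro l
      rw [(hgd l).deriv]
      set P := p * exp (-l) / (1 - p + p * exp (-l)) with hP
      have hP0 : 0 ≤ P := div_nonneg (mul_nonneg hp0 (exp_pos _).le) (hD l).le
      have hP1 : P ≤ 1 := by
        rw [hP, div_le_one (hD l)]
        nlinarith
      nlinarith [sq_nonneg (P - 1/2)])
  have hg0 : g 0 = 0 := by
    rw [hg]
    simp [Real.exp_zero]
  have hgnn : ∀ l : ℝ, 0 ≤ l → 0 ≤ g l := fun l hl0 => hg0 ▸ hgmono hl0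
  have hfmono : MonotoneOn f (Set.Ici 0) := by
    apply monotoneOn_of_deriv_nonneg (convex_Ici 0)
    · exact (Differentiable.continuous (fun l => (hfd l).differentiableAt)).continuousOn
    · exact fun x _ => (hfd x).differentiableAt.differentiableWithinAt
    · intro x hx
      rw [(hfd x).deriv]
      rw [interior_Ici] at hx
      exact hgnn x hx.le
  have hf0 : f 0 = 0 := by
    rw [hf]
    norm_num [Real.exp_zero]
  have h0f : 0 ≤ f lam := by
    rw [← hf0]
    exact hfmono (Set.self_mem_Ici) hl hl
  have hlog : log (1 - p + p * exp (-lam)) ≤ lam ^ 2 / 8 - lam * p := by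
    rw [hf] at h0f
    simp only at h0f
    linarith
  exact (Real.log_le_iff_le_exp (hD lam)).mp hlog

lemma perq_hoeffding (M : ℕ) (hM : 0 < M) (q : Measure ℝ) [IsProbabilityMeasure q]
    (hq : q (Set.Icc (0:ℝ) 1)ᶜ = 0) (μm t : ℝ) (ht0 : 0 < t)
    (hμ : μm ≤ ∫ x, x ∂q) :
    (Measure.pi fun _ : Fin M => q) {x | t ≤ μm - (1 / M) * ∑ m : Fin M, x m} ≤
      ENNReal.ofReal (exp (-2 * M * t ^ 2)) := by
  letI : MeasureSpace ℝ := ⟨q⟩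
  set μq : ℝ := ∫ x, x ∂q with hμq
  set lam : ℝ := 4 * t with hlam
  have hlam0 : (0:ℝ) ≤ lam := by positivity
  set P : Measure (Fin M → ℝ) := Measure.pi fun _ : Fin M => q with hP
  haveI : IsProbabilityMeasure P := by
    rw [hP]; infer_instance
  -- a.e. membership in [0,1]
  have hae : ∀ᵐ x ∂q, x ∈ Set.Icc (0:ℝ) 1 := by
    rw [ae_iff]
    convert hq using 2
    rfl
  have hint_id : Integrable (fun x : ℝ => x) q := by
    refine Integrable.mono' (integrable_const 1) measurable_id.aestronglyMeasurable ?_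
    filter_upwards [hae] with x hx
    rw [Real.norm_eq_abs, abs_le]
    constructor <;> [linarith [hx.1]; exact hx.2]
  have hμq0 : 0 ≤ μq := by
    apply integral_nonneg_of_ae
    filter_upwards [hae] with x hx using hx.1
  have hμq1 : μq ≤ 1 := by
    calc μq ≤ ∫ _x, (1:ℝ) ∂q := by
            apply integral_mono_ae hint_id (integrable_const 1)
            filter_upwards [hae] with x hx using hx.2
      _ = 1 := by simp
  -- the one-dim mgf bound
  have hint_exp : Integrable (fun x : ℝ => exp (-lam * x)) q := by
    refine Integrable.mono' (integrable_const 1)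
      (Continuous.aestronglyMeasurable (by continuity)) ?_
    filter_upwards [hae] with x hx
    rw [Real.norm_eq_abs, abs_of_pos (exp_pos _), ← Real.exp_zero]
    apply exp_le_exp.mpr
    nlinarith [hx.1]
  have hint_lin : Integrable (fun x : ℝ => 1 - x + x * exp (-lam)) q := by
    exact ((integrable_const 1).sub hint_id).add (hint_id.mul_const _)
  have h1dim : ∫ x, exp (-lam * x) ∂q ≤ exp (lam ^ 2 / 8 - lam * μq) := by
    have step1 : ∫ x, exp (-lam * x) ∂q ≤ ∫ x, (1 - x + x * exp (-lam)) ∂q := by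
      apply integral_mono_ae hint_exp hint_lin
      filter_upwards [hae] with x hx
      have hcx := convexOn_exp.2 (Set.mem_univ (0:ℝ)) (Set.mem_univ (-lam))
        (by linarith [hx.2] : (0:ℝ) ≤ 1 - x) hx.1 (by ring)
      simp only [smul_eq_mul, mul_zero, zero_add, Real.exp_zero, mul_one] at hcx
      calc exp (-lam * x) = exp ((1-x) * 0 + x * (-lam)) := by ring_nf
        _ ≤ (1-x) * 1 + x * exp (-lam) := by
            simpa [Real.exp_zero] using hcx
        _ = 1 - x + x * exp (-lam) := by ring
    have step2 : ∫ x, (1 - x + x * exp (-lam)) ∂q = 1 - μq + μq * exp (-lam) := by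
      have hA : Integrable (fun x : ℝ => 1 - x) q := by exact (integrable_const (1:ℝ)).sub hint_id
      have hB : Integrable (fun x : ℝ => x * exp (-lam)) q := hint_id.mul_const _
      rw [integral_add hA hB, integral_sub (integrable_const 1) hint_id, integral_mul_const]
      simp [hμq]
    rw [step2] at step1
    exact step1.trans (bern μq lam hμq0 hμq1 hlam0)
  -- Chernoff
  set X' : (Fin M → ℝ) → ℝ := fun x => -∑ m : Fin M, x m with hX'
  set ε : ℝ := M * t - M * μm with hε
  have hsubset : {x : Fin M → ℝ | t ≤ μm - (1 / M) * ∑ m : Fin M, x m} ⊆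
      {x | ε ≤ X' x} := by
    intro x hx
    simp only [Set.mem_setOf_eq] at hx ⊢
    have hMpos : (0:ℝ) < M := by exact_mod_cast hM
    rw [hX', hε]
    show (M:ℝ) * t - M * μm ≤ -∑ m : Fin M, x m
    have h1 : (1 / M : ℝ) * ∑ m : Fin M, x m ≤ μm - t := by linarith
    have h2 := (div_le_iff₀ hMpos).mp (by simpa [one_div, inv_mul_eq_div] using h1)
    linarith
  have hint_prod : Integrable (fun x : Fin M → ℝ => exp (lam * X' x)) P := by
    have haebox : ∀ᵐ x ∂P, x ∈ Set.pi Set.univ (fun _ : Fin M => Set.Icc (0:ℝ) 1) := by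
      rw [ae_iff]
      have : {x : Fin M → ℝ | ¬ x ∈ Set.pi Set.univ (fun _ : Fin M => Set.Icc (0:ℝ) 1)}
          = (Set.pi Set.univ (fun _ : Fin M => Set.Icc (0:ℝ) 1))ᶜ := rfl
      rw [this, measure_compl (MeasurableSet.univ_pi fun _ => measurableSet_Icc)
        (measure_ne_top _ _), hP, Measure.pi_pi]
      have hq1 : q (Set.Icc (0:ℝ) 1) = 1 := by
        have := measure_add_measure_compl (μ := q) (measurableSet_Icc (a := (0:ℝ)) (b := 1))
        rw [hq, add_zero] at this
        simpa using this
      simp [hq1]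
    refine Integrable.mono' (integrable_const 1) (Continuous.aestronglyMeasurable ?_) ?_
    · apply Continuous.rexp
      exact continuous_const.mul (continuous_finset_sum _ fun m _ => continuous_apply m).neg
    filter_upwards [haebox] with x hx
    rw [Real.norm_eq_abs, abs_of_pos (exp_pos _), ← Real.exp_zero]
    apply exp_le_exp.mpr
    rw [hX']
    show lam * -∑ m : Fin M, x m ≤ 0
    have : (0:ℝ) ≤ ∑ m : Fin M, x m :=
      Finset.sum_nonneg fun m _ => (hx m (Set.mem_univ m)).1
    nlinarith
  have hchern := measure_ge_le_exp_mul_mgf (X := X') (μ := P) (t := lam) ε hlam0 hint_prod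
  -- compute the mgf
  have hmgf : mgf X' P lam = (∫ x, exp (-lam * x) ∂q) ^ M := by
    have hexpand : ∀ x : Fin M → ℝ, exp (lam * X' x) = ∏ m : Fin M, exp (-lam * (x m)) := by
      intro x
      rw [← Real.exp_sum, hX']
      show exp (lam * -∑ m : Fin M, x m) = _
      congr 1
      rw [← Finset.mul_sum]
      ring
    calc mgf X' P lam = ∫ x, exp (lam * X' x) ∂P := rfl
      _ = ∫ x : Fin M → ℝ, ∏ m : Fin M, exp (-lam * (x m)) ∂P := by
          exact integral_congr_ae (Filter.Eventually.of_forall hexpand)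
      _ = (∫ x, exp (-lam * x) ∂q) ^ M := by
          have := MeasureTheory.integral_fintype_prod_eq_pow (𝕜 := ℝ) (E := ℝ) (ι := Fin M)
            (fun y => exp (-lam * y)) (μ := q)
          simpa [hP] using this
  have hpow : mgf X' P lam ≤ exp (lam ^ 2 / 8 - lam * μq) ^ M := by
    rw [hmgf]
    exact pow_le_pow_left₀ (integral_nonneg fun x => (exp_pos _).le) h1dim M
  have htr : (P {x : Fin M → ℝ | t ≤ μm - (1 / M) * ∑ m : Fin M, x m}).toReal
      ≤ exp (-2 * M * t ^ 2) := by
    calc (P {x : Fin M → ℝ | t ≤ μm - (1 / M) * ∑ m : Fin M, x m}).toReal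
        ≤ (P {x | ε ≤ X' x}).toReal :=
          ENNReal.toReal_mono (measure_ne_top _ _) (measure_mono hsubset)
      _ ≤ exp (-lam * ε) * mgf X' P lam := hchern
      _ ≤ exp (-lam * ε) * exp (lam ^ 2 / 8 - lam * μq) ^ M :=
          mul_le_mul_of_nonneg_left hpow (exp_pos _).le
      _ = exp (-lam * ε + M * (lam ^ 2 / 8 - lam * μq)) := by
          rw [← Real.exp_nat_mul, ← Real.exp_add]
      _ ≤ exp (-2 * M * t ^ 2) := by
          apply exp_le_exp.mpr
          rw [hlam, hε]
          have hM0 : (0:ℝ) ≤ M := Nat.cast_nonneg M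
          nlinarith [mul_nonneg (mul_nonneg hM0 ht0.le) (sub_nonneg.mpr hμ)]
  calc P {x : Fin M → ℝ | t ≤ μm - (1 / M) * ∑ m : Fin M, x m}
      = ENNReal.ofReal (P {x : Fin M → ℝ | t ≤ μm - (1 / M) * ∑ m : Fin M, x m}).toReal :=
        (ENNReal.ofReal_toReal (measure_ne_top _ _)).symm
    _ ≤ ENNReal.ofReal (exp (-2 * M * t ^ 2)) := ENNReal.ofReal_le_ofReal htr


noncomputable def atomicM (n : ℕ) (s : Finset (ℤ × ℚ)) : Measure ℝ :=
  (∑ p ∈ s, (ENNReal.ofReal (p.2 : ℝ)) • Measure.dirac ((p.1 : ℝ) / (n + 1))) +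
    (1 - ∑ p ∈ s, ENNReal.ofReal (p.2 : ℝ)) • Measure.dirac 0

noncomputable def rnd (n : ℕ) : ℝ → ℝ := fun x => (⌊x * (n + 1)⌋ : ℝ) / (n + 1)

lemma rnd_measurable (n : ℕ) : Measurable (rnd n) := by
  unfold rnd
  apply Measurable.div_const
  exact Measurable.comp measurable_from_top (measurable_id.mul_const _).floor

lemma rnd_dist (n : ℕ) (x : ℝ) : dist (rnd n x) x ≤ 1 / (n + 1) := by
  have hn : (0:ℝ) < n + 1 := by positivity
  have h1 : (⌊x * (n + 1)⌋ : ℝ) ≤ x * (n + 1) := Int.floor_le _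
  have h2 : x * (n + 1) < (⌊x * (n + 1)⌋ : ℝ) + 1 := Int.lt_floor_add_one _
  rw [Real.dist_eq]
  unfold rnd
  have h1 : (⌊x * (n + 1)⌋ : ℝ) ≤ x * (n + 1) := Int.floor_le _
  have h2 : x * (n + 1) < (⌊x * (n + 1)⌋ : ℝ) + 1 := Int.lt_floor_add_one _
  have hr : (⌊x * (n + 1)⌋ : ℝ) / (n + 1) ≤ x := by
    rw [div_le_iff₀ hn]; exact h1
  have hl : x - 1 / (n + 1) ≤ (⌊x * (n + 1)⌋ : ℝ) / (n + 1) := by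
    rw [le_div_iff₀ hn, sub_mul, div_mul_cancel₀ _ hn.ne']
    linarith
  rw [abs_le]
  constructor <;> [linarith; linarith [one_div_pos.mpr hn]]

lemma rnd_lp (n : ℕ) (μ : Measure ℝ) [IsProbabilityMeasure μ] :
    levyProkhorovDist μ (μ.map (rnd n)) ≤ 1 / (n + 1) := by
  haveI : IsProbabilityMeasure (μ.map (rnd n)) :=
    Measure.isProbabilityMeasure_map (rnd_measurable n).aemeasurable
  apply levyProkhorovDist_le_of_forall_le _ _ (by positivity)
  intro ε B hε hB
  have hthick : MeasurableSet (thickening ε B) := isOpen_thickening.measurableSet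
  rw [Measure.map_apply (rnd_measurable n) hthick]
  have hsub : B ⊆ (rnd n) ⁻¹' (thickening ε B) := by
    intro x hx
    simp only [Set.mem_preimage]
    rw [mem_thickening_iff]
    exact ⟨x, hx, lt_of_le_of_lt (rnd_dist n x) hε⟩
  calc μ B ≤ μ ((rnd n) ⁻¹' (thickening ε B)) := measure_mono hsub
    _ ≤ _ := le_self_add

lemma atomicM_apply (n : ℕ) (s : Finset (ℤ × ℚ)) {B : Set ℝ} (hB : MeasurableSet B) :
    atomicM n s B = (∑ p ∈ s, ENNReal.ofReal (p.2 : ℝ) * B.indicator 1 ((p.1 : ℝ) / (n + 1)))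
      + (1 - ∑ p ∈ s, ENNReal.ofReal (p.2 : ℝ)) * B.indicator 1 0 := by
  unfold atomicM
  rw [Measure.add_apply, Measure.smul_apply, Measure.finset_sum_apply]
  simp only [Measure.smul_apply, Measure.dirac_apply' _ hB, smul_eq_mul]

lemma atomicM_prob (n : ℕ) (s : Finset (ℤ × ℚ))
    (h : ∑ p ∈ s, ENNReal.ofReal (p.2 : ℝ) ≤ 1) : IsProbabilityMeasure (atomicM n s) := by
  constructor
  rw [atomicM_apply n s MeasurableSet.univ]
  simp only [Set.indicator_univ, Pi.one_apply, mul_one]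
  exact add_tsub_cancel_of_le h

lemma atomic_approx (μ : Measure ℝ) [IsProbabilityMeasure μ] (n : ℕ) :
    ∃ s : Finset (ℤ × ℚ), (∑ p ∈ s, ENNReal.ofReal (p.2 : ℝ)) ≤ 1 ∧
      levyProkhorovDist (atomicM n s) (μ.map (rnd n)) ≤ 2 / (n + 1) := by
  classical
  have hn : (0:ℝ) < n + 1 := by positivity
  set ν := μ.map (rnd n) with hν
  haveI : IsProbabilityMeasure ν := Measure.isProbabilityMeasure_map (rnd_measurable n).aemeasurable
  set atom : ℤ → ℝ := fun k => (k : ℝ) / (n + 1) with hatom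
  have hatom_inj : Function.Injective atom := by
    intro a b hab
    rw [hatom] at hab
    have h2 : (a:ℝ) = b := by
      field_simp at hab
      exact_mod_cast hab
    exact_mod_cast h2
  have hdisj : Pairwise (Function.onFun Disjoint (fun k : ℤ => ({atom k} : Set ℝ))) := by
    intro i j hij
    simp [Function.onFun, Set.disjoint_singleton, hatom_inj.ne hij]
  set p : ℤ → ENNReal := fun k => ν {atom k} with hp
  have hGsum : ∀ G : Finset ℤ, ∑ k ∈ G, p k = ν (⋃ k ∈ G, {atom k}) := by
    intro G
    rw [measure_biUnion_finset (hdisj.pairwiseDisjoint _) fun k _ => measurableSet_singleton _]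
  have htsum : ∑' k, p k = 1 := by
    rw [hp]
    rw [← measure_iUnion hdisj fun k => measurableSet_singleton _]
    rw [hν, Measure.map_apply (rnd_measurable n) (MeasurableSet.iUnion fun k =>
      measurableSet_singleton _)]
    have : (rnd n) ⁻¹' (⋃ k : ℤ, {atom k}) = Set.univ := by
      ext x
      simp only [Set.mem_preimage, Set.mem_iUnion, Set.mem_singleton_iff, Set.mem_univ, iff_true]
      exact ⟨⌊x * (n+1)⌋, rfl⟩
    rw [this, measure_univ]
  set δ' : ENNReal := ENNReal.ofReal (1/(n+1)) with hδ'
  have hδ'0 : δ' ≠ 0 := by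
    rw [hδ']
    simp only [ne_eq, ENNReal.ofReal_eq_zero, not_le]
    positivity
  have h1 : (1 : ENNReal) - δ' < ⨆ G : Finset ℤ, ∑ k ∈ G, p k := by
    rw [← ENNReal.tsum_eq_iSup_sum, htsum]
    exact ENNReal.sub_lt_self ENNReal.one_ne_top one_ne_zero hδ'0
  obtain ⟨F, hF⟩ := lt_iSup_iff.mp h1
  set η : ℝ := 1 / ((n+1) * (F.card + 1)) with hη
  have hη0 : (0:ℝ) < η := by positivity
  have hwex : ∀ k : ℤ, ∃ w : ℚ, ENNReal.ofReal (w:ℝ) ≤ p k ∧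
      p k ≤ ENNReal.ofReal (w:ℝ) + ENNReal.ofReal η := by
    intro k
    have hfin : p k ≠ ⊤ := measure_ne_top ν _
    obtain ⟨w, hw1, hw2⟩ := exists_rat_btwn
      (show (p k).toReal - η < (p k).toReal by linarith)
    refine ⟨w, ?_, ?_⟩
    · calc ENNReal.ofReal (w:ℝ) ≤ ENNReal.ofReal (p k).toReal :=
            ENNReal.ofReal_le_ofReal hw2.le
        _ = p k := ENNReal.ofReal_toReal hfin
    · calc p k = ENNReal.ofReal (p k).toReal := (ENNReal.ofReal_toReal hfin).symm
        _ ≤ ENNReal.ofReal ((w:ℝ) + η) := ENNReal.ofReal_le_ofReal (by linarith)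
        _ ≤ ENNReal.ofReal (w:ℝ) + ENNReal.ofReal η := ENNReal.ofReal_add_le
  choose w hw1 hw2 using hwex
  have hinjF : ∀ x ∈ F, ∀ y ∈ F, (x, w x) = (y, w y) → x = y := by
    intro x _ y _ h
    exact (Prod.mk.injEq _ _ _ _).mp h |>.1
  refine ⟨F.image (fun k => (k, w k)), ?_, ?_⟩
  · rw [Finset.sum_image hinjF]
    calc ∑ k ∈ F, ENNReal.ofReal ((w k : ℝ)) ≤ ∑ k ∈ F, p k :=
          Finset.sum_le_sum fun k _ => hw1 k
      _ = ν (⋃ k ∈ F, {atom k}) := hGsum F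
      _ ≤ 1 := prob_le_one
  · set s := F.image (fun k => (k, w k)) with hs
    set a : ENNReal := ∑ k ∈ F, ENNReal.ofReal ((w k : ℝ)) with ha
    set b : ENNReal := ∑ k ∈ F, p k with hb
    have hab : a ≤ b := Finset.sum_le_sum fun k _ => hw1 k
    have hb1 : b ≤ 1 := by rw [hb, hGsum F]; exact prob_le_one
    have hs_sum : ∑ q ∈ s, ENNReal.ofReal ((q.2 : ℝ)) = a := by
      rw [hs, Finset.sum_image hinjF, ha]
    have hcard : (F.card : ENNReal) * ENNReal.ofReal η ≤ ENNReal.ofReal (1/(n+1)) := by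
      rw [← ENNReal.ofReal_natCast F.card, ← ENNReal.ofReal_mul (Nat.cast_nonneg _)]
      apply ENNReal.ofReal_le_ofReal
      rw [hη]
      rw [mul_one_div, div_le_div_iff₀ (by positivity) hn]
      nlinarith [Nat.cast_nonneg (α := ℝ) F.card]
    have hba : b ≤ a + (F.card : ENNReal) * ENNReal.ofReal η := by
      calc b ≤ ∑ k ∈ F, (ENNReal.ofReal ((w k : ℝ)) + ENNReal.ofReal η) :=
            Finset.sum_le_sum fun k _ => hw2 k
        _ = a + (F.card : ENNReal) * ENNReal.ofReal η := by
            rw [Finset.sum_add_distrib, Finset.sum_const, nsmul_eq_mul, ha]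
    have hδb : (1 : ENNReal) ≤ δ' + b := by
      by_cases hδ1 : δ' ≤ 1
      · calc (1 : ENNReal) = (1 - δ') + δ' := (tsub_add_cancel_of_le hδ1).symm
          _ ≤ b + δ' := add_le_add_left hF.le _
          _ = δ' + b := add_comm _ _
      · push_neg at hδ1
        exact le_trans hδ1.le le_self_add
    have hrem : (1 : ENNReal) - a ≤ ENNReal.ofReal (2/(n+1)) := by
      rw [tsub_le_iff_right]
      have e2 : ENNReal.ofReal (2/(n+1)) = δ' + ENNReal.ofReal (1/(n+1)) := by
        rw [hδ', ← ENNReal.ofReal_add (by positivity) (by positivity)]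
        ring_nf
      rw [e2]
      calc (1 : ENNReal) ≤ δ' + b := hδb
        _ ≤ δ' + (a + (F.card : ENNReal) * ENNReal.ofReal η) := add_le_add_right hba _
        _ ≤ δ' + (a + ENNReal.ofReal (1/(n+1))) := by
            exact add_le_add_right (add_le_add_right hcard _) _
        _ = δ' + ENNReal.ofReal (1/(n+1)) + a := by ring
    have htv : ∀ B : Set ℝ, MeasurableSet B →
        atomicM n s B ≤ ν B + ENNReal.ofReal (2/(n+1)) := by
      intro B hB
      rw [atomicM_apply n s hB]
      have e1 : ∑ q ∈ s, ENNReal.ofReal ((q.2 : ℝ)) * B.indicator 1 ((q.1 : ℝ) / (n+1))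
          = ∑ k ∈ F, ENNReal.ofReal ((w k : ℝ)) * B.indicator 1 (atom k) := by
        rw [hs, Finset.sum_image hinjF]
      set K := F.filter (fun k => atom k ∈ B) with hK
      have e2 : ∑ k ∈ F, ENNReal.ofReal ((w k : ℝ)) * B.indicator 1 (atom k)
          = ∑ k ∈ K, ENNReal.ofReal ((w k : ℝ)) := by
        rw [hK, Finset.sum_filter]
        apply Finset.sum_congr rfl
        intro k _
        by_cases h : atom k ∈ B
        · simp [h]
        · simp [h]
      have e3 : ∑ k ∈ K, ENNReal.ofReal ((w k : ℝ)) ≤ ν B := by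
        calc ∑ k ∈ K, ENNReal.ofReal ((w k : ℝ)) ≤ ∑ k ∈ K, p k :=
              Finset.sum_le_sum fun k _ => hw1 k
          _ = ν (⋃ k ∈ K, {atom k}) := hGsum K
          _ ≤ ν B := by
              apply measure_mono
              intro x hx
              simp only [Set.mem_iUnion, Set.mem_singleton_iff] at hx
              obtain ⟨k, hk, rfl⟩ := hx
              exact (Finset.mem_filter.mp hk).2
      have e4 : (1 - ∑ q ∈ s, ENNReal.ofReal ((q.2 : ℝ))) * B.indicator 1 0
          ≤ ENNReal.ofReal (2/(n+1)) := by
        rw [hs_sum]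
        calc (1 - a) * B.indicator 1 0 ≤ (1 - a) * 1 := by
              gcongr
              by_cases h : (0:ℝ) ∈ B <;> simp [h]
          _ = 1 - a := mul_one _
          _ ≤ ENNReal.ofReal (2/(n+1)) := hrem
      calc _ ≤ ν B + ENNReal.ofReal (2/(n+1)) := by
            rw [e1, e2]
            exact add_le_add e3 e4
        _ = _ := rfl
    haveI : IsProbabilityMeasure (atomicM n s) := by
      apply atomicM_prob
      rw [hs_sum]
      exact hab.trans hb1
    apply levyProkhorovDist_le_of_forall_le _ _ (by positivity)
    intro ε B hε hB
    have hε0 : (0:ℝ) < ε := lt_of_le_of_lt (by positivity) hε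
    calc atomicM n s B ≤ ν B + ENNReal.ofReal (2/(n+1)) := htv B hB
      _ ≤ ν (thickening ε B) + ENNReal.ofReal ε :=
          add_le_add (measure_mono (self_subset_thickening hε0 B))
            (ENNReal.ofReal_le_ofReal hε.le)

open scoped Classical in
noncomputable def atomicP (i : ℕ × Finset (ℤ × ℚ)) : ProbabilityMeasure ℝ :=
  if h : IsProbabilityMeasure (atomicM i.1 i.2) then ⟨atomicM i.1 i.2, h⟩
  else ⟨Measure.dirac 0, by infer_instance⟩

instance : TopologicalSpace.SeparableSpace (LevyProkhorov (ProbabilityMeasure ℝ)) := by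
  apply TopologicalSpace.SeparableSpace.of_denseRange
    (fun i => (LevyProkhorov.toMeasureEquiv (α := ProbabilityMeasure ℝ)).symm (atomicP i))
  rw [Metric.denseRange_iff]
  intro y r hr
  set μ : ProbabilityMeasure ℝ := (LevyProkhorov.toMeasureEquiv (α := ProbabilityMeasure ℝ)) y with hμ
  obtain ⟨n, hn⟩ := exists_nat_gt (3 / r)
  have hn1 : (0:ℝ) < n + 1 := by positivity
  have h3r : 3 / (n + 1) < r := by
    rw [div_lt_iff₀ hn1]
    have h3 : 3 / r < n + 1 := lt_trans hn (by linarith)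
    calc (3:ℝ) = (3 / r) * r := by field_simp
      _ < (n + 1) * r := mul_lt_mul_of_pos_right h3 hr
      _ = r * (n + 1) := mul_comm _ _
  obtain ⟨s, hs1, hs2⟩ := atomic_approx μ.toMeasure n
  refine ⟨(n, s), ?_⟩
  haveI hP : IsProbabilityMeasure (atomicM n s) := atomicM_prob n s hs1
  have hfi : atomicP (n, s) = ⟨atomicM n s, hP⟩ := by
    simp only [atomicP]
    exact dif_pos hP
  haveI : IsProbabilityMeasure (μ.toMeasure.map (rnd n)) :=
    Measure.isProbabilityMeasure_map (rnd_measurable n).aemeasurable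
  set z : LevyProkhorov (ProbabilityMeasure ℝ) :=
    (LevyProkhorov.toMeasureEquiv (α := ProbabilityMeasure ℝ)).symm
      ⟨μ.toMeasure.map (rnd n), inferInstance⟩ with hz
  calc dist y ((LevyProkhorov.toMeasureEquiv (α := ProbabilityMeasure ℝ)).symm (atomicP (n, s)))
      ≤ dist y z + dist z ((LevyProkhorov.toMeasureEquiv (α := ProbabilityMeasure ℝ)).symm (atomicP (n, s))) :=
        dist_triangle _ _ _
    _ ≤ 1 / (n + 1) + 2 / (n + 1) := by
        apply add_le_add
        · exact rnd_lp n μ.toMeasure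
        · rw [LevyProkhorov.dist_probabilityMeasure_def]
          have : ((LevyProkhorov.toMeasureEquiv (α := ProbabilityMeasure ℝ)).symm
              (atomicP (n, s))).toMeasure.toMeasure = atomicM n s := by rw [hfi]; rfl
          rw [this]
          rw [levyProkhorovDist_comm]
          exact hs2
    _ = 3 / (n + 1) := by ring
    _ < r := h3r

instance : TopologicalSpace.SeparableSpace (ProbabilityMeasure ℝ) := by
  have h := LevyProkhorov.probabilityMeasureHomeomorph (Ω := ℝ)
  exact h.symm.surjective.denseRange.separableSpace h.symm.continuous

instance : SecondCountableTopology (ProbabilityMeasure ℝ) := by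
  letI : PseudoMetricSpace (ProbabilityMeasure ℝ) :=
    TopologicalSpace.pseudoMetrizableSpacePseudoMetric _
  exact UniformSpace.secondCountable_of_separable _

end Aux

/-- Hoeffding-type lower tail bound for exchangeable random variables:
`P(μ̃₋ - X̄ ≥ t) ≤ e^{-2Mt²}` where `μ̃₋ = inf_{q ∈ supp ρ} E_q[X₁]`. -/
theorem exchangeable_hoeffding_lower {Ω : Type*} [MeasureSpace Ω]
    [IsProbabilityMeasure (ℙ : Measure Ω)] (M : ℕ) (hM : 0 < M) (X : Fin M → Ω → ℝ)
    (hmeas : ∀ m, Measurable (X m)) (hbdd : ∀ m ω, X m ω ∈ Set.Icc (0 : ℝ) 1)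
    (ρ : Measure (ProbabilityMeasure ℝ)) [IsProbabilityMeasure ρ]
    (hlaw : Measure.map (fun ω (m : Fin M) => X m ω) (ℙ : Measure Ω) = iidMix M ρ)
    (μm : ℝ) (hμm : μm = sInf (pMean '' mSupport ρ))
    (t : ℝ) (ht0 : 0 < t) (ht1 : t < μm) :
    (ℙ : Measure Ω) {ω | t ≤ μm - (1 / M) * (∑ m : Fin M, X m ω)} ≤
      ENNReal.ofReal (exp (-2 * M * t ^ 2)) := by
  have hTm : Measurable (fun ω (m : Fin M) => X m ω) := measurable_pi_lambda _ fun m => hmeas m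
  set S : Set (Fin M → ℝ) := {x | t ≤ μm - (1 / M) * ∑ m : Fin M, x m} with hS
  have hSm : MeasurableSet S :=
    measurableSet_le measurable_const (measurable_const.sub
      ((Finset.univ.measurable_sum (fun (m : Fin M) (_ : m ∈ Finset.univ) => (measurable_pi_apply m : Measurable fun x : Fin M → ℝ => x m))).const_mul ((1:ℝ)/M)))
  have hevent : (ℙ : Measure Ω) {ω | t ≤ μm - (1 / M) * (∑ m : Fin M, X m ω)} =
      Measure.map (fun ω (m : Fin M) => X m ω) (ℙ : Measure Ω) S := by
    rw [Measure.map_apply hTm hSm]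
    rfl
  have hfae : AEMeasurable (fun q : ProbabilityMeasure ℝ =>
      Measure.pi fun _ : Fin M => (q : Measure ℝ)) ρ := by
    by_contra hc
    have h0 : iidMix M ρ = 0 := by
      unfold iidMix Measure.bind
      rw [Measure.map_of_not_aemeasurable hc, Measure.join_zero]
    rw [h0] at hlaw
    have h1 : Measure.map (fun ω (m : Fin M) => X m ω) (ℙ : Measure Ω) Set.univ = 1 := by
      rw [Measure.map_apply hTm MeasurableSet.univ]
      simp
    rw [hlaw] at h1
    simp at h1
  set G := hfae.mk _ with hG
  have hGm : Measurable G := hfae.measurable_mk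
  have hfG : (fun q : ProbabilityMeasure ℝ => Measure.pi fun _ : Fin M => (q : Measure ℝ))
      =ᵐ[ρ] G := hfae.ae_eq_mk
  have hiidG : iidMix M ρ = ρ.bind G := by
    unfold iidMix Measure.bind
    rw [Measure.map_congr hfG]
  have hbind : ∀ s : Set (Fin M → ℝ), MeasurableSet s →
      iidMix M ρ s = ∫⁻ q, G q s ∂ρ := by
    intro s hs
    rw [hiidG, Measure.bind_apply hs hGm.aemeasurable]
  -- a.e. concentration on the box
  set Box : Set (Fin M → ℝ) := Set.pi Set.univ fun _ => Set.Icc (0:ℝ) 1 with hBox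
  have hBoxm : MeasurableSet Box := MeasurableSet.univ_pi fun _ => measurableSet_Icc
  have hzero : iidMix M ρ Boxᶜ = 0 := by
    rw [← hlaw, Measure.map_apply hTm hBoxm.compl]
    convert measure_empty (μ := (ℙ : Measure Ω))
    rw [Set.eq_empty_iff_forall_notMem]
    intro ω hω
    exact hω fun m _ => hbdd m ω
  have haeBox : ∀ᵐ q ∂ρ, G q Boxᶜ = 0 := by
    have h := hbind Boxᶜ hBoxm.compl
    rw [hzero] at h
    exact (lintegral_eq_zero_iff ((Measure.measurable_coe hBoxm.compl).comp hGm)).mp h.symm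
  -- a.e. mean bound
  have haeMean : ∀ᵐ q ∂ρ, μm ≤ pMean q := by
    by_cases hbb : BddBelow (pMean '' mSupport ρ)
    swap
    · exfalso
      rw [hμm, csInf_of_not_bddBelow hbb, Real.sInf_empty] at ht1
      linarith
    have hnotin : ∀ q : ProbabilityMeasure ℝ, pMean q < μm → q ∉ mSupport ρ := by
      intro q hq hmem
      have h := csInf_le hbb ⟨q, hmem, rfl⟩
      rw [← hμm] at h
      linarith
    have hU : ∀ q : {q : ProbabilityMeasure ℝ // pMean q < μm},
        ∃ U : Set (ProbabilityMeasure ℝ), IsOpen U ∧ (q : ProbabilityMeasure ℝ) ∈ U ∧ ρ U = 0 := by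
      rintro ⟨q, hq⟩
      have h := hnotin q hq
      simp only [mSupport, Set.mem_setOf_eq] at h
      push_neg at h
      obtain ⟨U, h1, h2, h3⟩ := h
      exact ⟨U, h1, h2, h3⟩
    choose U hUo hUm hU0 using hU
    obtain ⟨T, hTc, hTeq⟩ := TopologicalSpace.isOpen_iUnion_countable U hUo
    rw [ae_iff]
    have heq : {q : ProbabilityMeasure ℝ | ¬ μm ≤ pMean q} = {q | pMean q < μm} := by
      ext q
      simp [not_le]
    rw [heq]
    apply measure_mono_null ?_ ((measure_biUnion_null_iff hTc).mpr fun i _ => hU0 i)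
    intro q hq
    rw [hTeq]
    exact Set.mem_iUnion.mpr ⟨⟨q, hq⟩, hUm _⟩
  -- combine
  calc (ℙ : Measure Ω) {ω | t ≤ μm - (1 / M) * (∑ m : Fin M, X m ω)}
      = iidMix M ρ S := by rw [hevent, hlaw]
    _ = ∫⁻ q, G q S ∂ρ := hbind S hSm
    _ ≤ ∫⁻ _q, ENNReal.ofReal (exp (-2 * M * t ^ 2)) ∂ρ := by
        apply lintegral_mono_ae
        filter_upwards [hfG, haeBox, haeMean] with q h1 h2 h3
        rw [← h1] at h2 ⊢
        haveI : IsProbabilityMeasure (q : Measure ℝ) := q.prop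
        have hIcc : (q : Measure ℝ) (Set.Icc (0:ℝ) 1) = 1 := by
          have h4 : (Measure.pi fun _ : Fin M => (q : Measure ℝ)) Box = 1 :=
            (prob_compl_eq_zero_iff hBoxm).mp h2
          rw [hBox, Measure.pi_pi] at h4
          simp only [Finset.prod_const, Finset.card_univ, Fintype.card_fin] at h4
          by_contra hne
          have hlt : (q : Measure ℝ) (Set.Icc (0:ℝ) 1) < 1 :=
            lt_of_le_of_ne prob_le_one hne
          have := pow_lt_one₀ zero_le hlt hM.ne'
          rw [h4] at this
          exact lt_irrefl _ this
        have hqc : (q : Measure ℝ) (Set.Icc (0:ℝ) 1)ᶜ = 0 :=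
          (prob_compl_eq_zero_iff measurableSet_Icc).mpr hIcc
        exact perq_hoeffding M hM (q : Measure ℝ) hqc μm t ht0 h3
    _ = ENNReal.ofReal (exp (-2 * M * t ^ 2)) := by
        rw [lintegral_const, measure_univ, mul_one]
end
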